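/- Let p ∈ (1,∞). Define u : [0,1] → ℝ by u(x) = (1/(p·π_{2,p})) · sin_{2,p}(π_{2,p}·min(x, 1−x)) (i.e. sin_{2,p}(π_{2,p} x) is extended to x ∈ [1/2,1] by the symmetry sin_{2,p}(π_{2,p}x) = sin_{2,p}(π_{2,p}(1−x))). Then u is positive on (0,1), u(0) = u(1) = 0, u satisfies −p²·(u′(x))² + 2p·u(x)·u″(x) + 1 = 0 on (0,1), and u is symmetric with respect to x = 1/2, i.e. u(x) = u(1−x) for all x ∈ [0,1]. -/

import Mathlib

open Set MeasureTheory Filter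

/-- Generalized arcsine: `arcsin_{p,q}(x) = ∫₀ˣ (1 - tᵠ)^(-1/p) dt`. -/
noncomputable def gArcsin (p q x : ℝ) : ℝ := ∫ t in (0:ℝ)..x, (1 - t ^ q) ^ (-(1 / p))

/-- Generalized pi: `π_{p,q} = 2 ∫₀¹ (1 - tᵠ)^(-1/p) dt`. -/
noncomputable def gPi (p q : ℝ) : ℝ := 2 * gArcsin p q 1

/-- `S` is the generalized sine `sin_{p,q}` (the inverse of `gArcsin p q` on `[0,1]`). -/
def IsGSin (p q : ℝ) (S : ℝ → ℝ) : Prop :=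
  ∀ y ∈ Icc (0:ℝ) 1, S (gArcsin p q y) = y

/-- `C` is the generalized cosine `cos_{p,q}`, the derivative of `S = sin_{p,q}`
on `[0, π_{p,q}/2]`. -/
def IsGCos (p q : ℝ) (S C : ℝ → ℝ) : Prop :=
  ∀ x ∈ Icc (0:ℝ) (gPi p q / 2), HasDerivWithinAt S (C x) (Icc (0:ℝ) (gPi p q / 2)) x

open Topology

namespace Aux

noncomputable def gg (p t : ℝ) : ℝ := (1 - t ^ p) ^ (-(1 / (2:ℝ)))

lemma gArcsin_eq (p x : ℝ) : gArcsin 2 p x = ∫ t in (0:ℝ)..x, gg p t := rfl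

lemma gg_meas (p : ℝ) : Measurable (gg p) := by
  unfold gg
  fun_prop

lemma gg_pos {p t : ℝ} (hp : 1 < p) (ht : t ∈ Ico (0:ℝ) 1) : 0 < gg p t := by
  apply Real.rpow_pos_of_pos
  have : t ^ p < 1 := Real.rpow_lt_one ht.1 ht.2 (by linarith)
  linarith

lemma rpow_le_self {p t : ℝ} (hp : 1 < p) (ht0 : 0 < t) (ht1 : t ≤ 1) : t ^ p ≤ t := by
  have := Real.rpow_le_rpow_of_exponent_ge ht0 ht1 (le_of_lt hp)
  simpa [Real.rpow_one] using this

lemma gg_int_one {p : ℝ} (hp : 1 < p) : IntervalIntegrable (gg p) volume 0 1 := by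
  have hh : IntervalIntegrable (fun t : ℝ => (1 - t) ^ (-(1/(2:ℝ)))) volume 0 1 := by
    have h0 : IntervalIntegrable (fun t : ℝ => t ^ (-(1/(2:ℝ)))) volume 0 1 :=
      intervalIntegral.intervalIntegrable_rpow' (by norm_num)
    have := h0.comp_sub_left 1
    simpa using this.symm
  apply hh.mono_fun' ((gg_meas p).aestronglyMeasurable.restrict)
  rw [Filter.EventuallyLE, ae_restrict_iff' measurableSet_uIoc]
  filter_upwards with t ht
  rw [uIoc_of_le (by norm_num : (0:ℝ) ≤ 1)] at ht
  rcases eq_or_lt_of_le ht.2 with h1 | h1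
  · subst h1
    simp [gg, Real.zero_rpow]
  · have h2 : t ^ p ≤ t := rpow_le_self hp ht.1 ht.2
    have h3 : (0:ℝ) < 1 - t := by linarith
    have h4 : gg p t ≤ (1 - t) ^ (-(1/(2:ℝ))) :=
      Real.rpow_le_rpow_of_nonpos h3 (by linarith) (by norm_num)
    have h5 : 0 ≤ gg p t := (gg_pos hp ⟨ht.1.le, h1⟩).le
    rw [Real.norm_eq_abs, abs_of_nonneg h5]
    exact h4

lemma gg_int {p : ℝ} (hp : 1 < p) {a b : ℝ} (ha : a ∈ Icc (0:ℝ) 1) (hb : b ∈ Icc (0:ℝ) 1) :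
    IntervalIntegrable (gg p) volume a b :=
  (gg_int_one hp).mono_set (by rw [uIcc_of_le (by norm_num : (0:ℝ) ≤ 1)]; exact uIcc_subset_Icc ha hb)

lemma F_zero (p : ℝ) : gArcsin 2 p 0 = 0 := by
  simp [gArcsin_eq]

lemma F_strictMono {p : ℝ} (hp : 1 < p) :
    StrictMonoOn (gArcsin 2 p) (Icc (0:ℝ) 1) := by
  intro a ha b hb hab
  have h1 : gArcsin 2 p b - gArcsin 2 p a = ∫ t in a..b, gg p t := by
    rw [gArcsin_eq, gArcsin_eq, ← intervalIntegral.integral_add_adjacent_intervals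
      (gg_int hp (left_mem_Icc.2 (by norm_num)) ha) (gg_int hp ha hb)]
    ring
  have h2 : 0 < ∫ t in a..b, gg p t := by
    apply intervalIntegral.intervalIntegral_pos_of_pos_on (gg_int hp ha hb)
    · intro t ht
      exact gg_pos hp ⟨le_of_lt (lt_of_le_of_lt ha.1 ht.1), lt_of_lt_of_le ht.2 hb.2⟩
    · exact hab
  linarith

lemma F_contOn {p : ℝ} (hp : 1 < p) : ContinuousOn (gArcsin 2 p) (Icc (0:ℝ) 1) := by
  have h := intervalIntegral.continuousOn_primitive_interval'
    (μ := volume) (gg_int_one hp) (a := 0) (by simp)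
  rw [uIcc_of_le (by norm_num : (0:ℝ) ≤ 1)] at h
  intro x hx
  exact ((h x hx).congr (fun y hy => (gArcsin_eq p y)) (gArcsin_eq p x))

lemma c_pos {p : ℝ} (hp : 1 < p) : 0 < gArcsin 2 p 1 := by
  have := F_strictMono hp (left_mem_Icc.2 (by norm_num)) (right_mem_Icc.2 (by norm_num))
    (by norm_num)
  rwa [F_zero] at this

lemma F_surj {p : ℝ} (hp : 1 < p) {t : ℝ} (ht : t ∈ Icc 0 (gArcsin 2 p 1)) :
    ∃ y ∈ Icc (0:ℝ) 1, gArcsin 2 p y = t := by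
  have h := intermediate_value_Icc (by norm_num : (0:ℝ) ≤ 1) (F_contOn hp)
  rw [F_zero] at h
  obtain ⟨y, hy, hyt⟩ := h ht
  exact ⟨y, hy, hyt⟩

end Aux

namespace Aux

variable {p : ℝ} {S : ℝ → ℝ}

lemma S_spec (hp : 1 < p) (hS : IsGSin 2 p S) {t : ℝ} (ht : t ∈ Icc 0 (gArcsin 2 p 1)) :
    S t ∈ Icc (0:ℝ) 1 ∧ gArcsin 2 p (S t) = t := by
  obtain ⟨y, hy, rfl⟩ := F_surj hp ht
  rw [hS y hy]
  exact ⟨hy, rfl⟩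

lemma S_zero (hS : IsGSin 2 p S) : S 0 = 0 := by
  have := hS 0 (by norm_num)
  rwa [F_zero] at this

lemma S_top (hS : IsGSin 2 p S) : S (gArcsin 2 p 1) = 1 := hS 1 (by norm_num)

lemma S_mono (hp : 1 < p) (hS : IsGSin 2 p S) :
    StrictMonoOn S (Icc 0 (gArcsin 2 p 1)) := by
  intro t1 h1 t2 h2 hlt
  by_contra h
  push_neg at h
  have e1 := (S_spec hp hS h1)
  have e2 := (S_spec hp hS h2)
  have := (F_strictMono hp).monotoneOn e2.1 e1.1 h
  rw [e1.2, e2.2] at this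
  exact absurd this (not_le.2 hlt)

lemma S_image (hp : 1 < p) (hS : IsGSin 2 p S) :
    Icc (0:ℝ) 1 ⊆ S '' (Icc 0 (gArcsin 2 p 1)) := by
  intro y hy
  refine ⟨gArcsin 2 p y, ?_, hS y hy⟩
  constructor
  · rw [← F_zero (p := p)]
    exact (F_strictMono hp).monotoneOn (by norm_num) hy hy.1
  · exact (F_strictMono hp).monotoneOn hy (by norm_num) hy.2

lemma S_contWithin (hp : 1 < p) (hS : IsGSin 2 p S) {t : ℝ}
    (ht : t ∈ Ioc 0 (gArcsin 2 p 1)) :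
    ContinuousWithinAt S (Iic (gArcsin 2 p 1)) t := by
  set c := gArcsin 2 p 1 with hc
  have hc0 : 0 < c := c_pos hp
  have hmem : t ∈ Icc 0 c := ⟨ht.1.le, ht.2⟩
  have hS0 : S 0 = 0 := S_zero hS
  have hSc : S c = 1 := S_top hS
  have hSt0 : 0 < S t := by
    have := S_mono hp hS (left_mem_Icc.2 hc0.le) hmem ht.1
    rwa [hS0] at this
  rcases eq_or_lt_of_le ht.2 with h1 | h1
  · subst h1
    apply (S_mono hp hS).continuousWithinAt_left_of_image_mem_nhdsWithin
    · exact Icc_mem_nhdsLE_of_mem ⟨hc0, le_rfl⟩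
    · rw [hSc]
      apply mem_of_superset _ (S_image hp hS)
      exact Icc_mem_nhdsLE_of_mem ⟨by norm_num, le_rfl⟩
  · apply ContinuousAt.continuousWithinAt
    apply (S_mono hp hS).continuousAt_of_image_mem_nhds
    · exact Icc_mem_nhds ht.1 h1
    · apply mem_of_superset _ (S_image hp hS)
      apply Icc_mem_nhds hSt0
      have := S_mono hp hS hmem (right_mem_Icc.2 hc0.le) h1
      rwa [hSc] at this

lemma gg_contAt (hp : 1 < p) {y : ℝ} (hy : y ∈ Ioo (0:ℝ) 1) : ContinuousAt (gg p) y := by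
  have h1 : ContinuousAt (fun t : ℝ => t ^ p) y :=
    Real.continuousAt_rpow_const y p (Or.inl hy.1.ne')
  have h2 : ContinuousAt (fun t : ℝ => 1 - t ^ p) y := continuousAt_const.sub h1
  have h3 : (1:ℝ) - y ^ p ≠ 0 := by
    have : y ^ p < 1 := Real.rpow_lt_one hy.1.le hy.2 (by linarith)
    simp only [ne_eq, sub_eq_zero]
    intro h
    rw [← h] at this
    exact lt_irrefl _ this
  exact h2.rpow_const (Or.inl h3)

lemma F_hasStrictDeriv (hp : 1 < p) {y : ℝ} (hy : y ∈ Ioo (0:ℝ) 1) :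
    HasStrictDerivAt (gArcsin 2 p) (gg p y) y := by
  have heq : gArcsin 2 p = fun u => ∫ t in (0:ℝ)..u, gg p t := funext (gArcsin_eq p)
  rw [heq]
  apply intervalIntegral.integral_hasStrictDerivAt_right
    (gg_int hp (by norm_num) ⟨hy.1.le, hy.2.le⟩)
  · exact ⟨univ, univ_mem, ((gg_meas p).aestronglyMeasurable).restrict⟩
  · exact gg_contAt hp hy

lemma S_hasStrictDeriv (hp : 1 < p) (hS : IsGSin 2 p S) {t : ℝ}
    (ht : t ∈ Ioo 0 (gArcsin 2 p 1)) :
    HasStrictDerivAt S ((1 - (S t) ^ p) ^ ((1:ℝ)/2)) t := by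
  obtain ⟨y, hy, rfl⟩ := F_surj hp ⟨ht.1.le, ht.2.le⟩
  have hy0 : 0 < y := by
    rcases eq_or_lt_of_le hy.1 with h | h
    · exfalso; rw [← h, F_zero] at ht; exact lt_irrefl _ ht.1
    · exact h
  have hy1 : y < 1 := by
    rcases eq_or_lt_of_le hy.2 with h | h
    · exfalso; rw [h] at ht; exact lt_irrefl _ ht.2
    · exact h
  have hF := F_hasStrictDeriv hp ⟨hy0, hy1⟩
  have hggpos : 0 < gg p y := gg_pos hp ⟨hy0.le, hy1⟩
  have hloc : ∀ᶠ x in 𝓝 y, S (gArcsin 2 p x) = x := by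
    filter_upwards [Ioo_mem_nhds hy0 hy1] with x hx
    exact hS x (Ioo_subset_Icc_self hx)
  have hinv := hF.to_local_left_inverse hggpos.ne' hloc
  rw [hS y hy]
  have hbase : (0:ℝ) < 1 - y ^ p := by
    have : y ^ p < 1 := Real.rpow_lt_one hy0.le hy1 (by linarith)
    linarith
  have : (gg p y)⁻¹ = (1 - y ^ p) ^ ((1:ℝ)/2) := by
    rw [gg, Real.rpow_neg hbase.le, inv_inv]
  rwa [this] at hinv

end Aux

namespace Aux

noncomputable def cc (p : ℝ) : ℝ := gArcsin 2 p 1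
noncomputable def tt (p x : ℝ) : ℝ := 2 * cc p * min x (1 - x)
noncomputable def qq (p : ℝ) (S : ℝ → ℝ) (x : ℝ) : ℝ := S (tt p x)
noncomputable def uu (p : ℝ) (S : ℝ → ℝ) (x : ℝ) : ℝ := (1 / (p * (2 * cc p))) * qq p S x
noncomputable def v1 (p : ℝ) (S : ℝ → ℝ) (x : ℝ) : ℝ :=
  (if x ≤ 1/2 then (1:ℝ) else -1) * ((1/p) * (1 - qq p S x ^ p) ^ ((1:ℝ)/2))
noncomputable def v2 (p : ℝ) (S : ℝ → ℝ) (x : ℝ) : ℝ := -(cc p) * qq p S x ^ (p - 1)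

variable {p : ℝ} {S : ℝ → ℝ}

lemma cc_pos (hp : 1 < p) : 0 < cc p := c_pos hp

lemma min_le_half (x : ℝ) : min x (1 - x) ≤ 1/2 := by
  rcases le_total x (1/2) with h | h
  · exact le_trans (min_le_left _ _) h
  · exact le_trans (min_le_right _ _) (by linarith)

lemma tt_le (hp : 1 < p) (x : ℝ) : tt p x ≤ cc p := by
  have hc := cc_pos (p := p) hp
  calc tt p x ≤ 2 * cc p * (1/2) := by
        apply mul_le_mul_of_nonneg_left (min_le_half x) (by positivity)
    _ = cc p := by ring

lemma tt_mem (hp : 1 < p) {x : ℝ} (hx : x ∈ Ioo (0:ℝ) 1) : tt p x ∈ Ioc 0 (cc p) := by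
  have hc := cc_pos (p := p) hp
  refine ⟨?_, tt_le hp x⟩
  have h1 : 0 < min x (1 - x) := lt_min hx.1 (by linarith [hx.2])
  unfold tt
  positivity

lemma tt_cont : Continuous (tt p) :=
  continuous_const.mul (continuous_id.min (continuous_const.sub continuous_id))

lemma qq_cont (hp : 1 < p) (hS : IsGSin 2 p S) {x : ℝ} (hx : x ∈ Ioo (0:ℝ) 1) :
    ContinuousAt (qq p S) x := by
  have h1 : ContinuousWithinAt S (Iic (cc p)) (tt p x) := S_contWithin hp hS (tt_mem hp hx)
  have h2 : Tendsto (tt p) (𝓝 x) (𝓝[Iic (cc p)] (tt p x)) :=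
    tendsto_nhdsWithin_iff.2 ⟨tt_cont.continuousAt.tendsto, Eventually.of_forall (tt_le hp)⟩
  exact h1.tendsto.comp h2

lemma qq_mem (hp : 1 < p) (hS : IsGSin 2 p S) {x : ℝ} (hx : x ∈ Ioo (0:ℝ) 1) :
    qq p S x ∈ Ioc 0 1 := by
  have ht := tt_mem hp hx
  have h1 := (S_spec hp hS ⟨ht.1.le, ht.2⟩).1
  have h2 : 0 < qq p S x := by
    have := S_mono hp hS (left_mem_Icc.2 (cc_pos hp).le) ⟨ht.1.le, ht.2⟩ ht.1
    rwa [S_zero hS] at this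
  exact ⟨h2, h1.2⟩

lemma tt_half (hp : 1 < p) {x : ℝ} (hx : x ∈ Ioo (0:ℝ) (1/2)) : tt p x = 2 * cc p * x := by
  unfold tt
  rw [min_eq_left (by linarith [hx.2])]

lemma tt_lt (hp : 1 < p) {x : ℝ} (hx : x ∈ Ioo (0:ℝ) (1/2)) : tt p x < cc p := by
  have hc := cc_pos (p := p) hp
  rw [tt_half hp hx]
  nlinarith [hx.2]

lemma qq_lt_one (hp : 1 < p) (hS : IsGSin 2 p S) {x : ℝ} (hx : x ∈ Ioo (0:ℝ) (1/2)) :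
    qq p S x < 1 := by
  have hc := cc_pos (p := p) hp
  have ht : tt p x ∈ Ioc 0 (cc p) := tt_mem hp ⟨hx.1, by linarith [hx.2]⟩
  have := S_mono hp hS ⟨ht.1.le, ht.2⟩ (right_mem_Icc.2 hc.le) (tt_lt hp hx)
  rwa [S_top hS] at this

lemma qq_half (hp : 1 < p) (hS : IsGSin 2 p S) : qq p S (1/2) = 1 := by
  have : tt p (1/2 : ℝ) = cc p := by unfold tt; rw [show (1:ℝ) - 1/2 = 1/2 by norm_num, min_self]; ring
  unfold qq
  rw [this]
  exact S_top hS

lemma qq_sym (z : ℝ) : qq p S (1 - z) = qq p S z := by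
  unfold qq tt
  rw [sub_sub_cancel, min_comm]

lemma uu_sym (z : ℝ) : uu p S (1 - z) = uu p S z := by
  unfold uu; rw [qq_sym]

lemma v2_sym (z : ℝ) : v2 p S (1 - z) = v2 p S z := by
  unfold v2; rw [qq_sym]

lemma v1_half (hp : 1 < p) (hS : IsGSin 2 p S) : v1 p S (1/2) = 0 := by
  unfold v1
  rw [qq_half hp hS, if_pos le_rfl, Real.one_rpow]
  simp [Real.zero_rpow]

lemma v1_sym (hp : 1 < p) (hS : IsGSin 2 p S) (z : ℝ) : v1 p S (1 - z) = - v1 p S z := by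
  rcases lt_trichotomy z (1/2) with h | h | h
  · unfold v1
    rw [qq_sym, if_neg (by intro hle; linarith), if_pos h.le]
    ring
  · rw [h]
    norm_num [v1_half hp hS]
  · unfold v1
    rw [qq_sym, if_pos (by linarith), if_neg (by intro hle; linarith)]
    ring

end Aux

namespace Aux

variable {p : ℝ} {S : ℝ → ℝ}

lemma qq_hasDeriv (hp : 1 < p) (hS : IsGSin 2 p S) {x : ℝ} (hx : x ∈ Ioo (0:ℝ) (1/2)) :
    HasDerivAt (qq p S) (2 * cc p * (1 - qq p S x ^ p) ^ ((1:ℝ)/2)) x := by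
  have hc := cc_pos (p := p) hp
  have ht : tt p x ∈ Ioo 0 (cc p) := ⟨(tt_mem hp ⟨hx.1, by linarith [hx.2]⟩).1, tt_lt hp hx⟩
  have hSd := (S_hasStrictDeriv hp hS ht).hasDerivAt
  have hinner : HasDerivAt (fun z : ℝ => 2 * cc p * z) (2 * cc p) x := by
    simpa using (hasDerivAt_id x).const_mul (2 * cc p)
  rw [tt_half hp hx] at hSd
  have hcomp : HasDerivAt (fun z : ℝ => S (2 * cc p * z))
      ((1 - S (2 * cc p * x) ^ p) ^ ((1:ℝ)/2) * (2 * cc p)) x := by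
    simpa [Function.comp_def] using HasDerivAt.comp x hSd hinner
  have hev : qq p S =ᶠ[𝓝 x] fun z => S (2 * cc p * z) := by
    filter_upwards [Iio_mem_nhds hx.2] with z hz
    unfold qq tt
    rw [min_eq_left (by simp at hz; linarith)]
  have := hcomp.congr_of_eventuallyEq hev
  refine this.congr_deriv ?_
  symm
  unfold qq
  rw [tt_half hp hx]
  ring

lemma uu_hasDeriv (hp : 1 < p) (hS : IsGSin 2 p S) {x : ℝ} (hx : x ∈ Ioo (0:ℝ) (1/2)) :
    HasDerivAt (uu p S) (v1 p S x) x := by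
  have hc := cc_pos (p := p) hp
  have hp0 : (0:ℝ) < p := by linarith
  have h1 := (qq_hasDeriv hp hS hx).const_mul (1 / (p * (2 * cc p)))
  have : uu p S = fun z => (1 / (p * (2 * cc p))) * qq p S z := rfl
  rw [this]
  refine h1.congr_deriv ?_
  symm
  unfold v1
  rw [if_pos hx.2.le]
  field_simp

lemma v1_hasDeriv (hp : 1 < p) (hS : IsGSin 2 p S) {x : ℝ} (hx : x ∈ Ioo (0:ℝ) (1/2)) :
    HasDerivAt (v1 p S) (v2 p S x) x := by
  have hc := cc_pos (p := p) hp
  have hp0 : (0:ℝ) < p := by linarith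
  have hq := qq_hasDeriv hp hS hx
  have hqpos : 0 < qq p S x := (qq_mem hp hS ⟨hx.1, by linarith [hx.2]⟩).1
  have hqlt : qq p S x < 1 := qq_lt_one hp hS hx
  have hApos : 0 < 1 - qq p S x ^ p := by
    have : qq p S x ^ p < 1 := Real.rpow_lt_one hqpos.le hqlt (by linarith)
    linarith
  have h1 : HasDerivAt (fun z => qq p S z ^ p)
      ((2 * cc p * (1 - qq p S x ^ p) ^ ((1:ℝ)/2)) * p * qq p S x ^ (p - 1)) x :=
    hq.rpow_const (Or.inl hqpos.ne')
  have h2 : HasDerivAt (fun z => 1 - qq p S z ^ p)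
      (-((2 * cc p * (1 - qq p S x ^ p) ^ ((1:ℝ)/2)) * p * qq p S x ^ (p - 1))) x :=
    h1.const_sub 1
  have h3 : HasDerivAt (fun z => (1/p) * (1 - qq p S z ^ p) ^ ((1:ℝ)/2))
      ((1/p) * (-((2 * cc p * (1 - qq p S x ^ p) ^ ((1:ℝ)/2)) * p * qq p S x ^ (p - 1)) *
        ((1:ℝ)/2) * (1 - qq p S x ^ p) ^ ((1:ℝ)/2 - 1))) x :=
    (h2.rpow_const (p := (1:ℝ)/2) (Or.inl hApos.ne')).const_mul (1/p)
  have hev : v1 p S =ᶠ[𝓝 x] fun z => (1/p) * (1 - qq p S z ^ p) ^ ((1:ℝ)/2) := by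
    filter_upwards [Iio_mem_nhds hx.2] with z hz
    unfold v1
    rw [if_pos (le_of_lt hz)]
    ring
  have h4 := h3.congr_of_eventuallyEq hev
  refine h4.congr_deriv ?_
  symm
  unfold v2
  have hA1 : (1 - qq p S x ^ p) ^ ((1:ℝ)/2 - 1) * (1 - qq p S x ^ p) ^ ((1:ℝ)/2) = 1 := by
    rw [← Real.rpow_add hApos]
    norm_num
  generalize hBB : (1 - qq p S x ^ p) ^ ((1:ℝ)/2 - 1) = B at hA1 ⊢
  generalize hCC : (1 - qq p S x ^ p) ^ ((1:ℝ)/2) = C at hA1 ⊢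
  field_simp
  linear_combination hA1

end Aux

namespace Aux

noncomputable def GG (p : ℝ) (S : ℝ → ℝ) (x : ℝ) : ℝ :=
  (1/p) * (1 - qq p S x ^ p) ^ ((1:ℝ)/2)

variable {p : ℝ} {S : ℝ → ℝ}

lemma uu_hasDeriv_right (hp : 1 < p) (hS : IsGSin 2 p S) {x : ℝ}
    (hx : x ∈ Ioo (1/2:ℝ) 1) : HasDerivAt (uu p S) (v1 p S x) x := by
  have hx' : 1 - x ∈ Ioo (0:ℝ) (1/2) := ⟨by linarith [hx.2], by linarith [hx.1]⟩
  have h0 := uu_hasDeriv hp hS hx'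
  have hσ : HasDerivAt (fun z : ℝ => 1 - z) (-1) x := by
    simpa using (hasDerivAt_id x).const_sub 1
  have h1 : HasDerivAt (fun z => uu p S (1 - z)) (v1 p S (1 - x) * (-1)) x := by
    simpa [Function.comp_def] using HasDerivAt.comp x h0 hσ
  rw [funext (fun z => uu_sym (p := p) (S := S) z), v1_sym hp hS] at h1
  simpa using h1

lemma v1_hasDeriv_right (hp : 1 < p) (hS : IsGSin 2 p S) {x : ℝ}
    (hx : x ∈ Ioo (1/2:ℝ) 1) : HasDerivAt (v1 p S) (v2 p S x) x := by
  have hx' : 1 - x ∈ Ioo (0:ℝ) (1/2) := ⟨by linarith [hx.2], by linarith [hx.1]⟩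
  have h0 := v1_hasDeriv hp hS hx'
  have hσ : HasDerivAt (fun z : ℝ => 1 - z) (-1) x := by
    simpa using (hasDerivAt_id x).const_sub 1
  have h1 : HasDerivAt (fun z => v1 p S (1 - z)) (v2 p S (1 - x) * (-1)) x := by
    simpa [Function.comp_def] using HasDerivAt.comp x h0 hσ
  rw [funext (fun z => v1_sym hp hS z), v2_sym] at h1
  have h2 := h1.neg
  simpa [Pi.neg_def] using h2

lemma uu_contAt (hp : 1 < p) (hS : IsGSin 2 p S) {x : ℝ} (hx : x ∈ Ioo (0:ℝ) 1) :
    ContinuousAt (uu p S) x := by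
  show ContinuousAt (fun z => (1 / (p * (2 * cc p))) * qq p S z) x
  exact continuousAt_const.mul (qq_cont hp hS hx)

lemma GG_contAt (hp : 1 < p) (hS : IsGSin 2 p S) {x : ℝ} (hx : x ∈ Ioo (0:ℝ) 1) :
    ContinuousAt (GG p S) x := by
  have hq := qq_cont hp hS hx
  have hqpos := (qq_mem hp hS hx).1
  have h1 : ContinuousAt (fun z => 1 - qq p S z ^ p) x :=
    continuousAt_const.sub (hq.rpow_const (Or.inl hqpos.ne'))
  exact continuousAt_const.mul (h1.rpow_const (Or.inr (by norm_num)))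

lemma GG_half (hp : 1 < p) (hS : IsGSin 2 p S) : GG p S (1/2) = 0 := by
  unfold GG
  rw [qq_half hp hS, Real.one_rpow]
  simp [Real.zero_rpow]

lemma v1_eq_GG {z : ℝ} (hz : z ≤ 1/2) : v1 p S z = GG p S z := by
  unfold v1 GG
  rw [if_pos hz, one_mul]

lemma v2_contAt (hp : 1 < p) (hS : IsGSin 2 p S) {x : ℝ} (hx : x ∈ Ioo (0:ℝ) 1) :
    ContinuousAt (v2 p S) x :=
  continuousAt_const.mul ((qq_cont hp hS hx).rpow_const (Or.inl (qq_mem hp hS hx).1.ne'))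

lemma v2_half (hp : 1 < p) (hS : IsGSin 2 p S) : v2 p S (1/2) = -(cc p) := by
  unfold v2
  rw [qq_half hp hS, Real.one_rpow, mul_one]

lemma half_mem : (1/2:ℝ) ∈ Ioo (0:ℝ) 1 := by norm_num

lemma hIio : Ioo (0:ℝ) (1/2) ∈ 𝓝[<] (1/2:ℝ) :=
  Ioo_mem_nhdsLT_of_mem ⟨by norm_num, le_rfl⟩

lemma uu_hasDeriv_half (hp : 1 < p) (hS : IsGSin 2 p S) :
    HasDerivAt (uu p S) 0 (1/2 : ℝ) := by
  have A1 : HasDerivWithinAt (uu p S) 0 (Iic (1/2:ℝ)) (1/2) := by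
    apply hasDerivWithinAt_Iic_of_tendsto_deriv (s := Ioo (0:ℝ) (1/2))
    · intro z hz
      exact (uu_hasDeriv hp hS hz).differentiableAt.differentiableWithinAt
    · exact (uu_contAt hp hS half_mem).continuousWithinAt
    · exact hIio
    · have h1 : Tendsto (GG p S) (𝓝[<] (1/2:ℝ)) (𝓝 0) := by
        have := (GG_contAt hp hS half_mem).tendsto
        rw [GG_half hp hS] at this
        exact this.mono_left nhdsWithin_le_nhds
      apply h1.congr'
      filter_upwards [hIio] with z hz
      rw [← v1_eq_GG hz.2.le, ← (uu_hasDeriv hp hS hz).deriv]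
  have A2 : HasDerivWithinAt (uu p S) 0 (Ici (1/2:ℝ)) (1/2) := by
    have hσ : HasDerivWithinAt (fun z : ℝ => 1 - z) (-1) (Ici (1/2:ℝ)) (1/2) := by
      simpa using ((hasDerivAt_id ((1:ℝ)/2)).const_sub 1).hasDerivWithinAt
    have hmap : MapsTo (fun z : ℝ => 1 - z) (Ici (1/2:ℝ)) (Iic (1/2:ℝ)) := by
      intro z hz
      simp only [mem_Ici, mem_Iic] at *
      linarith
    have h12 : ((1:ℝ) - 1/2) = 1/2 := by norm_num
    have hA1' : HasDerivWithinAt (uu p S) 0 (Iic (1/2:ℝ)) ((fun z : ℝ => 1 - z) (1/2)) := by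
      rw [show ((fun z : ℝ => 1 - z) ((1:ℝ)/2)) = 1/2 by norm_num]
      exact A1
    have hcomp := HasDerivWithinAt.comp ((1:ℝ)/2) hA1' hσ hmap
    have hcomp' : HasDerivWithinAt (fun z : ℝ => uu p S (1 - z)) (0 * -1) (Ici (1/2:ℝ)) (1/2) :=
      hcomp
    rw [funext (fun z => uu_sym (p := p) (S := S) z)] at hcomp'
    simpa using hcomp'
  have h := A1.union A2
  rwa [Iic_union_Ici, hasDerivWithinAt_univ] at h

lemma v1_hasDeriv_half (hp : 1 < p) (hS : IsGSin 2 p S) :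
    HasDerivAt (v1 p S) (-(cc p)) (1/2 : ℝ) := by
  have B1 : HasDerivWithinAt (v1 p S) (-(cc p)) (Iic (1/2:ℝ)) (1/2) := by
    apply hasDerivWithinAt_Iic_of_tendsto_deriv (s := Ioo (0:ℝ) (1/2))
    · intro z hz
      exact (v1_hasDeriv hp hS hz).differentiableAt.differentiableWithinAt
    · show Tendsto (v1 p S) (𝓝[Ioo (0:ℝ) (1/2)] (1/2:ℝ)) (𝓝 (v1 p S (1/2)))
      rw [v1_half hp hS, ← GG_half hp hS]
      apply Tendsto.congr' _ (((GG_contAt hp hS half_mem).tendsto).mono_left nhdsWithin_le_nhds)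
      filter_upwards [self_mem_nhdsWithin] with z hz
      exact (v1_eq_GG hz.2.le).symm
    · exact hIio
    · have h1 : Tendsto (v2 p S) (𝓝[<] (1/2:ℝ)) (𝓝 (-(cc p))) := by
        have := (v2_contAt hp hS half_mem).tendsto
        rw [v2_half hp hS] at this
        exact this.mono_left nhdsWithin_le_nhds
      apply h1.congr'
      filter_upwards [hIio] with z hz
      rw [← (v1_hasDeriv hp hS hz).deriv]
  have B2 : HasDerivWithinAt (v1 p S) (-(cc p)) (Ici (1/2:ℝ)) (1/2) := by
    have hσ : HasDerivWithinAt (fun z : ℝ => 1 - z) (-1) (Ici (1/2:ℝ)) (1/2) := by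
      simpa using ((hasDerivAt_id ((1:ℝ)/2)).const_sub 1).hasDerivWithinAt
    have hmap : MapsTo (fun z : ℝ => 1 - z) (Ici (1/2:ℝ)) (Iic (1/2:ℝ)) := by
      intro z hz
      simp only [mem_Ici, mem_Iic] at *
      linarith
    have hB1' : HasDerivWithinAt (v1 p S) (-(cc p)) (Iic (1/2:ℝ)) ((fun z : ℝ => 1 - z) (1/2)) := by
      rw [show ((fun z : ℝ => 1 - z) ((1:ℝ)/2)) = 1/2 by norm_num]
      exact B1
    have hcomp := HasDerivWithinAt.comp ((1:ℝ)/2) hB1' hσ hmap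
    have hcomp' : HasDerivWithinAt (fun z : ℝ => v1 p S (1 - z)) (-cc p * -1) (Ici (1/2:ℝ)) (1/2) :=
      hcomp
    rw [funext (fun z => v1_sym hp hS z)] at hcomp'
    have := hcomp'.neg
    simpa [Pi.neg_def] using this
  have h := B1.union B2
  rwa [Iic_union_Ici, hasDerivWithinAt_univ] at h

lemma ode (hp : 1 < p) (hS : IsGSin 2 p S) {x : ℝ} (hx : x ∈ Ioo (0:ℝ) 1) :
    -(p^2) * (v1 p S x)^2 + 2*p*(uu p S x)*(v2 p S x) + 1 = 0 := by
  have hc := cc_pos (p := p) hp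
  have hp0 : (0:ℝ) < p := by linarith
  obtain ⟨hq0, hq1⟩ := qq_mem hp hS hx
  have hsp : qq p S x ^ p ≤ 1 := Real.rpow_le_one hq0.le hq1 (by linarith)
  have hsq : ((1 - qq p S x ^ p) ^ ((1:ℝ)/2))^2 = 1 - qq p S x ^ p := by
    rw [← Real.rpow_natCast ((1 - qq p S x ^ p) ^ ((1:ℝ)/2)) 2, ← Real.rpow_mul (by linarith)]
    norm_num
  have hps : qq p S x ^ (p - 1) * qq p S x = qq p S x ^ p := by
    calc qq p S x ^ (p-1) * qq p S x = qq p S x ^ (p-1) * qq p S x ^ (1:ℝ) := by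
          rw [Real.rpow_one]
      _ = qq p S x ^ (p - 1 + 1) := (Real.rpow_add hq0 _ _).symm
      _ = qq p S x ^ p := by ring_nf
  have h2 : (v1 p S x)^2 = (1/p)^2 * (1 - qq p S x ^ p) := by
    unfold v1
    rcases le_or_gt x (1/2) with h | h
    · rw [if_pos h, one_mul, mul_pow, hsq]
    · rw [if_neg (not_le.2 h)]
      have he : ((-1:ℝ) * ((1/p) * (1 - qq p S x ^ p) ^ ((1:ℝ)/2)))^2
          = ((1/p) * (1 - qq p S x ^ p) ^ ((1:ℝ)/2))^2 := by ring
      rw [he, mul_pow, hsq]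
  rw [h2]
  unfold uu v2
  field_simp
  linear_combination (-1) * hps
end Aux


/-- Corollary 2.3: `u(x) = (1/(p π_{2,p})) sin_{2,p}(π_{2,p} min(x,1-x))` is the positive
solution of `-p²(u')² + 2p u u'' + 1 = 0`, `u(0)=u(1)=0`, and it is symmetric about `x = 1/2`. -/
theorem stmt_2 (p : ℝ) (hp : 1 < p)
    (S : ℝ → ℝ) (hS : IsGSin 2 p S)
    (u : ℝ → ℝ)
    (hu : ∀ x, u x = (1 / (p * gPi 2 p)) * S (gPi 2 p * min x (1 - x))) :
    (∀ x ∈ Ioo (0:ℝ) 1, 0 < u x) ∧ u 0 = 0 ∧ u 1 = 0 ∧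
    (∃ u' u'' : ℝ → ℝ,
      ContinuousOn u'' (Ioo 0 1) ∧
      (∀ x ∈ Ioo (0:ℝ) 1, HasDerivAt u (u' x) x ∧ HasDerivAt u' (u'' x) x) ∧
      (∀ x ∈ Ioo (0:ℝ) 1,
        -(p ^ 2) * (u' x) ^ 2 + 2 * p * u x * u'' x + 1 = 0)) ∧
    (∀ x ∈ Icc (0:ℝ) 1, u x = u (1 - x)) := by
  have hueq : u = Aux.uu p S := by
    funext x
    rw [hu x]
    rfl
  subst hueq
  refine ⟨?_, ?_, ?_, ⟨Aux.v1 p S, Aux.v2 p S, ?_, ?_, ?_⟩, ?_⟩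
  · intro x hx
    have h1 := (Aux.qq_mem hp hS hx).1
    have hc := Aux.cc_pos (p := p) hp
    have hp0 : (0:ℝ) < p := by linarith
    show 0 < (1 / (p * (2 * Aux.cc p))) * Aux.qq p S x
    positivity
  · show (1 / (p * (2 * Aux.cc p))) * Aux.qq p S 0 = 0
    have h0 : Aux.qq p S 0 = 0 := by
      unfold Aux.qq Aux.tt
      rw [show min (0:ℝ) (1 - 0) = 0 by norm_num, mul_zero]
      exact Aux.S_zero hS
    rw [h0, mul_zero]
  · show (1 / (p * (2 * Aux.cc p))) * Aux.qq p S 1 = 0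
    have h0 : Aux.qq p S 1 = 0 := by
      unfold Aux.qq Aux.tt
      rw [show min (1:ℝ) (1 - 1) = 0 by norm_num, mul_zero]
      exact Aux.S_zero hS
    rw [h0, mul_zero]
  · intro x hx
    exact (Aux.v2_contAt hp hS hx).continuousWithinAt
  · intro x hx
    rcases lt_trichotomy x (1/2) with h | h | h
    · exact ⟨Aux.uu_hasDeriv hp hS ⟨hx.1, h⟩, Aux.v1_hasDeriv hp hS ⟨hx.1, h⟩⟩
    · subst h
      constructor
      · have h1 := Aux.uu_hasDeriv_half hp hS
        rwa [← Aux.v1_half hp hS] at h1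
      · have h1 := Aux.v1_hasDeriv_half hp hS
        rwa [← Aux.v2_half hp hS] at h1
    · exact ⟨Aux.uu_hasDeriv_right hp hS ⟨h, hx.2⟩, Aux.v1_hasDeriv_right hp hS ⟨h, hx.2⟩⟩
  · intro x hx
    exact Aux.ode hp hS hx
  · intro x _
    exact (Aux.uu_sym x).symm
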